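/- arXiv:1603.03949 — 2 statements merged into one kernel-verified Lean document; each statement's English description precedes it below -/
import Mathlib

section
/- Let 0 < ε < 1 and let f : ℝ → ℝ be twice continuously differentiable with f, f', f'' bounded. Then for every x ∈ ℝ, the principal value integral PV ∫_ℝ ∂ₓ[ (f(x) − f(x−α)) |α|^ε / α ] dα exists (as the limit δ → 0 of the integral over {δ ≤ |α| ≤ 1/δ}) and equals −(1−ε) · PV ∫_ℝ (f(x) − f(x−α)) / |α|^{2−ε} dα; in particular PV ∫_ℝ ∂ₓ Δ_α^ε f(x) dα = −(1−ε) Λ^{1−ε}f(x) (with normalizing constant 1). -/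
open MeasureTheory Filter Set Real Topology

noncomputable section

/-- Truncated domain `{α : δ ≤ |α| ≤ 1/δ}` for principal value integrals. -/
def pvSet (δ : ℝ) : Set ℝ := {α : ℝ | δ ≤ |α| ∧ |α| ≤ δ⁻¹}

/-- The principal value integral of `g` over `ℝ` exists and has value `L`. -/
def HasPV (g : ℝ → ℝ) (L : ℝ) : Prop :=
  Tendsto (fun δ : ℝ => ∫ α in pvSet δ, g α) (nhdsWithin 0 (Set.Ioi 0)) (nhds L)

/-- The principal value integral of `g` (junk value if the limit does not exist). -/
def pv (g : ℝ → ℝ) : ℝ :=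
  limUnder (nhdsWithin 0 (Set.Ioi 0)) (fun δ : ℝ => ∫ α in pvSet δ, g α)

/-- Sup norm (as a supremum of absolute values). -/
def supN (f : ℝ → ℝ) : ℝ := ⨆ x : ℝ, |f x|

/-- Homogeneous Hölder seminorm of exponent `γ`. -/
def holderS (γ : ℝ) (g : ℝ → ℝ) : ℝ :=
  ⨆ p : ℝ × ℝ, if p.1 = p.2 then (0:ℝ) else |g p.1 - g p.2| / |p.1 - p.2| ^ γ

/-- The `C^{2,γ}` norm: `‖f‖_∞ + ‖f'‖_∞ + ‖f''‖_∞ + |f''|_{Ċ^γ}`. -/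
def c2Norm (γ : ℝ) (f : ℝ → ℝ) : ℝ :=
  supN f + supN (deriv f) + supN (deriv (deriv f)) + holderS γ (deriv (deriv f))

/-- Membership in `C^{2,γ}(ℝ)`: twice continuously differentiable, `f`, `f'`, `f''`
bounded and `f''` uniformly `γ`-Hölder continuous. -/
def MemC2 (γ : ℝ) (f : ℝ → ℝ) : Prop :=
  ContDiff ℝ 2 f ∧ (∃ C, ∀ x, |f x| ≤ C) ∧ (∃ C, ∀ x, |deriv f x| ≤ C) ∧
    (∃ C, ∀ x, |deriv (deriv f) x| ≤ C) ∧
    ∃ H, ∀ x y, |deriv (deriv f) x - deriv (deriv f) y| ≤ H * |x - y| ^ γ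

/-- The `L²(ℝ)` norm. -/
def l2N (f : ℝ → ℝ) : ℝ := Real.sqrt (∫ x : ℝ, (f x) ^ 2)

/-- Membership in `L²(ℝ)`. -/
def MemL2 (f : ℝ → ℝ) : Prop := MeasureTheory.MemLp f 2 MeasureTheory.volume

/-- The regularized difference quotient `Δ_α^ε f (x) = (f x - f (x - α)) |α|^ε / α`. -/
def regDiff (ε : ℝ) (f : ℝ → ℝ) (α x : ℝ) : ℝ := (f x - f (x - α)) * |α| ^ ε / α

/-- `f` solves the regularized system
`∂ₜ f - ε ∂ₓ² f = PV ∫ ∂ₓ arctan (Δ_α^ε f) dα` on the time interval `(0,T]`. -/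
def IsRegSolution (ε : ℝ) (f : ℝ → ℝ → ℝ) (T : ℝ) : Prop :=
  ∀ t ∈ Set.Ioc (0:ℝ) T, ∀ x : ℝ,
    DifferentiableAt ℝ (fun s => f s x) t ∧
    HasPV (fun α => regDiff ε (deriv (f t)) α x / (1 + (regDiff ε (f t) α x) ^ 2))
      (deriv (fun s => f s x) t - ε * deriv (deriv (f t)) x)

/-- `f` solves the 2D Muskat contour equation
`∂ₜ f = PV ∫ (∂ₓf(x) - ∂ₓf(x-α)) α / (α² + (f(x) - f(x-α))²) dα` for times in `s`. -/
def IsMuskatSolution (f : ℝ → ℝ → ℝ) (s : Set ℝ) : Prop :=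
  ∀ t ∈ s, ∀ x : ℝ,
    DifferentiableAt ℝ (fun τ => f τ x) t ∧
    HasPV (fun α => (deriv (f t) x - deriv (f t) (x - α)) * α /
        (α ^ 2 + (f t x - f t (x - α)) ^ 2))
      (deriv (fun τ => f τ x) t)

end

/-- For `f ∈ C²` with `f, f', f''` bounded, the principal value
integral `PV ∫ ∂ₓ Δ_α^ε f (x) dα` exists and equals
`-(1-ε) PV ∫ (f x - f (x-α)) / |α|^{2-ε} dα = -(1-ε) Λ^{1-ε} f (x)`. -/
theorem pv_regDiff_eq_fractional_laplacian
    (ε : ℝ) (hε : ε ∈ Set.Ioo (0:ℝ) 1)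
    (f : ℝ → ℝ) (hf : ContDiff ℝ 2 f)
    (hb : ∃ C : ℝ, ∀ x : ℝ, |f x| ≤ C ∧ |deriv f x| ≤ C ∧ |deriv (deriv f) x| ≤ C) :
    ∀ x : ℝ, ∃ L : ℝ,
      HasPV (fun α => (f x - f (x - α)) / |α| ^ (2 - ε)) L ∧
      HasPV (fun α => regDiff ε (deriv f) α x) (-(1 - ε) * L) := by
  obtain ⟨C, hC⟩ := hb
  have hC0 : 0 ≤ C := le_trans (abs_nonneg _) (hC 0).1
  have hε0 : 0 < ε := hε.1
  have hε1 : ε < 1 := hε.2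
  have hfd : Differentiable ℝ f := hf.differentiable two_ne_zero
  have hf1 : ContDiff ℝ 1 (deriv f) :=
    (contDiff_succ_iff_deriv.mp ((by norm_num : ((1:WithTop ℕ∞)+1) = 2) ▸ hf)).2.2
  have hfd' : Differentiable ℝ (deriv f) := hf1.differentiable one_ne_zero
  have hcont1 : Continuous (deriv f) := hfd'.continuous
  have hcontf : Continuous f := hfd.continuous
  -- f' is C-Lipschitz
  have hlip : ∀ a b : ℝ, |deriv f a - deriv f b| ≤ C * |a - b| := by
    intro a b
    have := Convex.norm_image_sub_le_of_norm_hasDerivWithin_le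
      (f := deriv f) (f' := deriv (deriv f)) (s := (univ : Set ℝ)) (C := C)
      (fun t _ => (hfd' t).hasDerivAt.hasDerivWithinAt)
      (fun t _ => (hC t).2.2) convex_univ (mem_univ b) (mem_univ a)
    simpa [Real.norm_eq_abs] using this
  intro x
  set u : ℝ → ℝ := fun α => 2 * f x - f (x - α) - f (x + α) with hu_def
  set ψ : ℝ → ℝ := fun α => u α * α ^ (ε - 2) with hψ_def
  set φ : ℝ → ℝ := fun α => u α * α ^ (ε - 1) with hφ_def
  set w : ℝ → ℝ :=
    fun α => (deriv f (x - α) - deriv f (x + α)) * α ^ (ε - 1) + (ε - 1) * ψ α with hw_def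
  set g : ℝ → ℝ := fun α => (f x - f (x - α)) / |α| ^ (2 - ε) with hg_def
  -- derivative of u
  have hu' : ∀ α : ℝ, HasDerivAt u (deriv f (x - α) - deriv f (x + α)) α := by
    intro α
    have h1 : HasDerivAt (fun α : ℝ => f (x - α)) (-(deriv f (x - α))) α := by
      have := (hfd (x - α)).hasDerivAt.comp α ((hasDerivAt_id α).const_sub x)
      simp at this; exact this
    have h2 : HasDerivAt (fun α : ℝ => f (x + α)) (deriv f (x + α)) α := by
      have := (hfd (x + α)).hasDerivAt.comp α ((hasDerivAt_id α).const_add x)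
      simp at this; exact this
    have h3 := ((hasDerivAt_const α (2 * f x)).sub h1).sub h2
    exact h3.congr_deriv (by ring)
  have hub : ∀ α : ℝ, |u α| ≤ 4 * C := by
    intro α
    have h1 := abs_le.mp (hC x).1
    have h2 := abs_le.mp (hC (x - α)).1
    have h3 := abs_le.mp (hC (x + α)).1
    rw [hu_def]; rw [abs_le]; constructor <;> simp only [] <;> nlinarith
  have hub2 : ∀ α : ℝ, 0 ≤ α → |u α| ≤ 2 * C * α ^ 2 := by
    intro α hα
    have hd : ∀ t ∈ Icc (0:ℝ) α,
        HasDerivWithinAt u (deriv f (x - t) - deriv f (x + t)) (Icc 0 α) t :=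
      fun t _ => (hu' t).hasDerivWithinAt
    have hb' : ∀ t ∈ Icc (0:ℝ) α, ‖deriv f (x - t) - deriv f (x + t)‖ ≤ 2 * C * α := by
      intro t ht
      have h := hlip (x - t) (x + t)
      have habs : |x - t - (x + t)| = 2 * t := by
        rw [show x - t - (x + t) = -(2 * t) by ring, abs_neg, abs_of_nonneg (by linarith [ht.1])]
      rw [habs] at h
      rw [Real.norm_eq_abs]
      nlinarith [ht.1, ht.2]
    have key := Convex.norm_image_sub_le_of_norm_hasDerivWithin_le hd hb' (convex_Icc _ _)
      (left_mem_Icc.mpr hα) (right_mem_Icc.mpr hα)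
    have hu0 : u 0 = 0 := by simp only [hu_def]; norm_num; ring
    rw [hu0, sub_zero, sub_zero, Real.norm_eq_abs, Real.norm_eq_abs, abs_of_nonneg hα] at key
    calc |u α| ≤ 2 * C * α * α := key
    _ = 2 * C * α ^ 2 := by ring
  have hucont : Continuous u := by
    rw [hu_def]
    exact (continuous_const.sub (hcontf.comp (continuous_const.sub continuous_id))).sub
      (hcontf.comp (continuous_const.add continuous_id))
  -- continuity off zero
  have hrpow : ∀ p : ℝ, ContinuousOn (fun α : ℝ => α ^ p) {α : ℝ | α ≠ 0} :=
    fun p α hα => (Real.continuousAt_rpow_const α p (Or.inl hα)).continuousWithinAt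
  have hψcont : ContinuousOn ψ {α : ℝ | α ≠ 0} := by
    rw [hψ_def]; exact hucont.continuousOn.mul (hrpow (ε - 2))
  have hwcont : ContinuousOn w {α : ℝ | α ≠ 0} := by
    rw [hw_def]
    exact (((hcont1.comp (continuous_const.sub continuous_id)).sub
      (hcont1.comp (continuous_const.add continuous_id))).continuousOn.mul
        (hrpow (ε - 1))).add (continuousOn_const.mul hψcont)
  have hgcont : ContinuousOn g {α : ℝ | α ≠ 0} := by
    rw [hg_def]
    apply ContinuousOn.div
    · exact (continuous_const.sub (hcontf.comp (continuous_const.sub continuous_id))).continuousOn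
    · intro α hα
      exact (((Real.continuousAt_rpow_const |α| (2 - ε)
        (Or.inl (abs_ne_zero.mpr hα))).comp continuous_abs.continuousAt)).continuousWithinAt
    · intro α hα
      exact ne_of_gt (Real.rpow_pos_of_pos (abs_pos.mpr hα) _)
  have hregcont : ContinuousOn (fun α => regDiff ε (deriv f) α x) {α : ℝ | α ≠ 0} := by
    unfold regDiff
    apply ContinuousOn.div
    · exact ((continuous_const.sub (hcont1.comp
        (continuous_const.sub continuous_id))).continuousOn.mul
        ((continuous_abs.continuousOn).rpow_const (fun α hα => Or.inl (abs_ne_zero.mpr hα))))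
    · exact continuousOn_id
    · exact fun α hα => hα
  -- ψ is integrable on Ioi 0
  have hIoisub : ∀ {a : ℝ}, 0 < a → (Ioi a ⊆ {α : ℝ | α ≠ 0}) :=
    fun {a} ha t ht => ne_of_gt (lt_trans ha ht)
  have hIocsub : Ioc (0:ℝ) 1 ⊆ {α : ℝ | α ≠ 0} := fun t ht => ne_of_gt ht.1
  have hψ_int : IntegrableOn ψ (Ioi (0:ℝ)) := by
    have h01 : IntegrableOn ψ (Ioc (0:ℝ) 1) := by
      have hbd : IntegrableOn (fun _ : ℝ => 2 * C) (Ioc (0:ℝ) 1) :=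
        (integrableOn_const_iff).mpr (Or.inr measure_Ioc_lt_top)
      apply Integrable.mono' hbd ((hψcont.mono hIocsub).aestronglyMeasurable measurableSet_Ioc)
      refine (ae_restrict_iff' measurableSet_Ioc).mpr (ae_of_all _ fun a ha => ?_)
      have ha0 : 0 < a := ha.1
      have h2 : a ^ (2:ℝ) * a ^ (ε - 2) = a ^ ε := by
        rw [← Real.rpow_add ha0]; norm_num
      have : ‖ψ a‖ = |u a| * a ^ (ε - 2) := by
        rw [hψ_def, Real.norm_eq_abs, abs_mul,
          abs_of_nonneg (Real.rpow_pos_of_pos ha0 _).le]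
      rw [this]
      calc |u a| * a ^ (ε - 2) ≤ (2 * C * a ^ 2) * a ^ (ε - 2) := by
            apply mul_le_mul_of_nonneg_right (hub2 a ha0.le)
              (Real.rpow_pos_of_pos ha0 _).le
      _ = 2 * C * a ^ ε := by
            rw [mul_assoc]; congr 1
            rw [show (a:ℝ) ^ (2:ℕ) = a ^ ((2:ℕ):ℝ) from (Real.rpow_natCast a 2).symm,
              ← Real.rpow_add ha0]
            congr 1; push_cast; ring
      _ ≤ 2 * C := by
            have : a ^ ε ≤ 1 := Real.rpow_le_one ha0.le ha.2 hε0.le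
            nlinarith
    have h1i : IntegrableOn ψ (Ioi (1:ℝ)) := by
      have hmaj : IntegrableOn (fun α : ℝ => 4 * C * α ^ (ε - 2)) (Ioi (1:ℝ)) :=
        (integrableOn_Ioi_rpow_of_lt (by linarith) one_pos).const_mul _
      apply Integrable.mono' hmaj
        ((hψcont.mono (hIoisub one_pos)).aestronglyMeasurable measurableSet_Ioi)
      refine (ae_restrict_iff' measurableSet_Ioi).mpr (ae_of_all _ fun a ha => ?_)
      have ha0 : (0:ℝ) < a := lt_trans one_pos ha
      have : ‖ψ a‖ = |u a| * a ^ (ε - 2) := by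
        rw [hψ_def, Real.norm_eq_abs, abs_mul,
          abs_of_nonneg (Real.rpow_pos_of_pos ha0 _).le]
      rw [this]
      exact mul_le_mul_of_nonneg_right (hub a) (Real.rpow_pos_of_pos ha0 _).le
    have := h01.union h1i
    rwa [Ioc_union_Ioi_eq_Ioi one_pos.le] at this
  set L : ℝ := ∫ α in Ioi (0:ℝ), ψ α with hL_def
  -- decomposition of pv integrals (0 < δ < 1)
  have hdecomp : ∀ (h : ℝ → ℝ), ContinuousOn h {α : ℝ | α ≠ 0} →
      ∀ δ : ℝ, δ ∈ Ioo (0:ℝ) 1 →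
      ∫ α in pvSet δ, h α = ∫ α in δ..δ⁻¹, (h α + h (-α)) := by
    intro h hcont δ hδ
    have hδ0 : 0 < δ := hδ.1
    have hδi : 1 < δ⁻¹ := (one_lt_inv₀ hδ0).mpr hδ.2
    have hδδi : δ ≤ δ⁻¹ := le_of_lt (lt_trans hδ.2 hδi)
    have hsub1 : Icc (-δ⁻¹) (-δ) ⊆ {α : ℝ | α ≠ 0} :=
      fun t ht => ne_of_lt (lt_of_le_of_lt ht.2 (by linarith))
    have hsub2 : Icc δ δ⁻¹ ⊆ {α : ℝ | α ≠ 0} :=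
      fun t ht => ne_of_gt (lt_of_lt_of_le hδ0 ht.1)
    have hset : pvSet δ = Icc (-δ⁻¹) (-δ) ∪ Icc δ δ⁻¹ := by
      ext α
      simp only [pvSet, mem_setOf_eq, mem_union, mem_Icc]
      constructor
      · rintro ⟨h1, h2⟩
        rcases le_or_gt 0 α with hα | hα
        · right; rw [abs_of_nonneg hα] at h1 h2; exact ⟨h1, h2⟩
        · left; rw [abs_of_neg hα] at h1 h2; constructor <;> linarith
      · rintro (⟨h1, h2⟩ | ⟨h1, h2⟩)
        · rw [abs_of_neg (by linarith : α < 0)]; constructor <;> linarith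
        · rw [abs_of_nonneg (by linarith : 0 ≤ α)]; exact ⟨h1, h2⟩
    have hint1 : IntegrableOn h (Icc (-δ⁻¹) (-δ)) :=
      (hcont.mono hsub1).integrableOn_compact isCompact_Icc
    have hint2 : IntegrableOn h (Icc δ δ⁻¹) :=
      (hcont.mono hsub2).integrableOn_compact isCompact_Icc
    have hdisj : Disjoint (Icc (-δ⁻¹) (-δ)) (Icc δ δ⁻¹) := by
      rw [Set.disjoint_left]
      rintro a ⟨_, h2⟩ ⟨h3, _⟩
      linarith
    rw [hset, setIntegral_union hdisj measurableSet_Icc hint1 hint2]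
    have hni : IntervalIntegrable h volume δ δ⁻¹ :=
      ((uIcc_of_le hδδi) ▸ hint2).intervalIntegrable
    have hnegcont : ContinuousOn (fun α => h (-α)) (Icc δ δ⁻¹) := by
      apply (hcont.mono hsub1).comp continuous_neg.continuousOn
      intro t ht
      have h1 := (mem_Icc.mp ht).1
      have h2 := (mem_Icc.mp ht).2
      show -t ∈ Icc (-δ⁻¹) (-δ)
      exact mem_Icc.mpr ⟨by linarith, by linarith⟩
    have hni2 : IntervalIntegrable (fun α => h (-α)) volume δ δ⁻¹ :=
      ((uIcc_of_le hδδi) ▸ hnegcont.integrableOn_compact isCompact_Icc).intervalIntegrable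
    rw [intervalIntegral.integral_add hni hni2, intervalIntegral.integral_comp_neg h]
    rw [integral_Icc_eq_integral_Ioc, integral_Icc_eq_integral_Ioc,
      ← intervalIntegral.integral_of_le (by linarith : -δ⁻¹ ≤ -δ),
      ← intervalIntegral.integral_of_le hδδi]
    ring
  -- pointwise identities on the positive half line
  have hkey_g : ∀ α : ℝ, 0 < α → g α + g (-α) = ψ α := by
    intro α hα
    have h1 : |α| = α := abs_of_pos hα
    have h2 : |(-α)| = α := by rw [abs_neg, h1]
    simp only [hg_def, hψ_def, hu_def, h1, h2, sub_neg_eq_add]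
    rw [← add_div, show ε - 2 = -(2 - ε) by ring, Real.rpow_neg hα.le,
      ← div_eq_mul_inv]
    congr 1
    ring
  have hkey_r : ∀ α : ℝ, 0 < α →
      regDiff ε (deriv f) α x + regDiff ε (deriv f) (-α) x
        = (deriv f (x + α) - deriv f (x - α)) * α ^ (ε - 1) := by
    intro α hα
    have h1 : |α| = α := abs_of_pos hα
    have h2 : |(-α)| = α := by rw [abs_neg, h1]
    unfold regDiff
    simp only [h1, h2, sub_neg_eq_add]
    rw [Real.rpow_sub hα, Real.rpow_one, div_neg, ← sub_eq_add_neg,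
      div_sub_div_same, ← sub_mul, mul_div_assoc]
    congr 1
    ring
  -- FTC identity
  have hφ' : ∀ α : ℝ, 0 < α → HasDerivAt φ (w α) α := by
    intro α hα
    have h2 : HasDerivAt (fun t : ℝ => t ^ (ε - 1)) ((ε - 1) * α ^ (ε - 1 - 1)) α :=
      Real.hasDerivAt_rpow_const (Or.inl hα.ne')
    have h3 := (hu' α).mul h2
    rw [hφ_def, hw_def, hψ_def]
    refine h3.congr_deriv ?_
    rw [show ε - 1 - 1 = ε - 2 by ring]
    ring
  -- main identity for δ ∈ (0,1)
  have hmain : ∀ δ : ℝ, δ ∈ Ioo (0:ℝ) 1 →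
      ∫ α in pvSet δ, regDiff ε (deriv f) α x
        = (φ δ - φ δ⁻¹) + (ε - 1) * ∫ α in δ..δ⁻¹, ψ α := by
    intro δ hδ
    have hδ0 : 0 < δ := hδ.1
    have hδi : 1 < δ⁻¹ := (one_lt_inv₀ hδ0).mpr hδ.2
    have hδδi : δ ≤ δ⁻¹ := le_of_lt (lt_trans hδ.2 hδi)
    have hsub2 : Icc δ δ⁻¹ ⊆ {α : ℝ | α ≠ 0} :=
      fun t ht => ne_of_gt (lt_of_lt_of_le hδ0 ht.1)
    have huicc : uIcc δ δ⁻¹ = Icc δ δ⁻¹ := uIcc_of_le hδδi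
    have hwint : IntervalIntegrable w volume δ δ⁻¹ :=
      (huicc ▸ (hwcont.mono hsub2)).intervalIntegrable
    have hψint : IntervalIntegrable ψ volume δ δ⁻¹ :=
      (huicc ▸ (hψcont.mono hsub2)).intervalIntegrable
    have hFTC : ∫ α in δ..δ⁻¹, w α = φ δ⁻¹ - φ δ := by
      apply intervalIntegral.integral_eq_sub_of_hasDerivAt
      · intro t ht
        rw [huicc] at ht
        exact hφ' t (lt_of_lt_of_le hδ0 ht.1)
      · exact hwint
    rw [hdecomp _ hregcont δ hδ]
    have hcongr : EqOn (fun α => regDiff ε (deriv f) α x + regDiff ε (deriv f) (-α) x)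
        (fun α => -(w α) + (ε - 1) * ψ α) (uIcc δ δ⁻¹) := by
      intro t ht
      rw [huicc] at ht
      have ht0 : 0 < t := lt_of_lt_of_le hδ0 ht.1
      simp only []
      rw [hkey_r t ht0, hw_def]
      ring
    have hsplit : ∫ α in δ..δ⁻¹, (-(w α) + (ε - 1) * ψ α)
        = (∫ α in δ..δ⁻¹, -(w α)) + ∫ α in δ..δ⁻¹, (ε - 1) * ψ α :=
      intervalIntegral.integral_add
        (hwint.neg : IntervalIntegrable (fun α => -(w α)) volume δ δ⁻¹)
        (hψint.const_mul _)
    rw [intervalIntegral.integral_congr hcongr, hsplit,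
      intervalIntegral.integral_neg, hFTC,
      intervalIntegral.integral_const_mul]
    ring
  -- convergence of the ψ-integral
  have hT1 : Tendsto (fun δ : ℝ => ∫ α in δ..δ⁻¹, ψ α) (𝓝[>] (0:ℝ)) (𝓝 L) := by
    have hmeas : AEStronglyMeasurable ψ (volume.restrict (Ioi (0:ℝ))) :=
      (hψcont.mono (fun t (ht : t ∈ Ioi (0:ℝ)) => ne_of_gt ht)).aestronglyMeasurable
        measurableSet_Ioi
    have key := MeasureTheory.tendsto_integral_filter_of_dominated_convergence
      (μ := volume.restrict (Ioi (0:ℝ))) (l := 𝓝[>] (0:ℝ))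
      (F := fun δ α => indicator (Ioc δ δ⁻¹) ψ α) (f := ψ) (bound := fun α => ‖ψ α‖)
      (Eventually.of_forall fun δ => hmeas.indicator measurableSet_Ioc)
      (Eventually.of_forall fun δ => ae_of_all _ fun a => norm_indicator_le_norm_self _ _)
      hψ_int.norm
      (by
        filter_upwards [ae_restrict_mem measurableSet_Ioi] with a ha
        have ha0 : 0 < a := ha
        have hmin : 0 < min a a⁻¹ := lt_min ha0 (inv_pos.mpr ha0)
        apply Tendsto.congr' _ tendsto_const_nhds
        filter_upwards [Ioo_mem_nhdsGT_of_mem (Set.mem_Ico.mpr ⟨le_refl 0, hmin⟩)] with δ hδ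
        have hδ0 : 0 < δ := hδ.1
        have h1 : δ < a := lt_of_lt_of_le hδ.2 (min_le_left _ _)
        have h2 : a ≤ δ⁻¹ := by
          rw [← inv_inv a]
          exact inv_anti₀ hδ0 (le_of_lt (lt_of_lt_of_le hδ.2 (min_le_right _ _)))
        exact (indicator_of_mem (Set.mem_Ioc.mpr ⟨h1, h2⟩) ψ).symm)
    apply Tendsto.congr' _ key
    filter_upwards [Ioo_mem_nhdsGT_of_mem (Set.mem_Ico.mpr ⟨le_refl 0, one_pos⟩)] with δ hδ
    have hδ0 : 0 < δ := hδ.1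
    have hδδi : δ ≤ δ⁻¹ := le_of_lt (lt_trans hδ.2 ((one_lt_inv₀ hδ0).mpr hδ.2))
    have hsub : Ioc δ δ⁻¹ ⊆ Ioi (0:ℝ) := fun t ht => mem_Ioi.mpr (lt_trans hδ0 ht.1)
    rw [integral_indicator measurableSet_Ioc, Measure.restrict_restrict measurableSet_Ioc,
      Set.inter_eq_self_of_subset_left hsub,
      intervalIntegral.integral_of_le hδδi]
  -- boundary terms vanish
  have hz1 : Tendsto (fun δ : ℝ => δ ^ (1 + ε)) (𝓝[>] (0:ℝ)) (𝓝 0) := by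
    have hc : ContinuousAt (fun t : ℝ => t ^ (1 + ε)) 0 :=
      Real.continuousAt_rpow_const 0 (1 + ε) (Or.inr (by linarith))
    have := hc.tendsto.mono_left (nhdsWithin_le_nhds : 𝓝[>] (0:ℝ) ≤ 𝓝 0)
    rwa [Real.zero_rpow (by linarith : (1:ℝ) + ε ≠ 0)] at this
  have hz2 : Tendsto (fun δ : ℝ => δ ^ (1 - ε)) (𝓝[>] (0:ℝ)) (𝓝 0) := by
    have hc : ContinuousAt (fun t : ℝ => t ^ (1 - ε)) 0 :=
      Real.continuousAt_rpow_const 0 (1 - ε) (Or.inr (by linarith))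
    have := hc.tendsto.mono_left (nhdsWithin_le_nhds : 𝓝[>] (0:ℝ) ≤ 𝓝 0)
    rwa [Real.zero_rpow (by linarith : (1:ℝ) - ε ≠ 0)] at this
  have hT2 : Tendsto (fun δ : ℝ => φ δ) (𝓝[>] (0:ℝ)) (𝓝 0) := by
    apply squeeze_zero_norm' (a := fun δ => 2 * C * δ ^ (1 + ε))
    · filter_upwards [self_mem_nhdsWithin] with δ (hδ0 : (0:ℝ) < δ)
      have h1 : ‖φ δ‖ = |u δ| * δ ^ (ε - 1) := by
        rw [hφ_def, Real.norm_eq_abs, abs_mul, abs_of_nonneg (Real.rpow_pos_of_pos hδ0 _).le]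
      rw [h1]
      calc |u δ| * δ ^ (ε - 1) ≤ (2 * C * δ ^ 2) * δ ^ (ε - 1) :=
            mul_le_mul_of_nonneg_right (hub2 δ hδ0.le) (Real.rpow_pos_of_pos hδ0 _).le
      _ = 2 * C * δ ^ (1 + ε) := by
            rw [mul_assoc]
            congr 1
            rw [show (δ:ℝ) ^ (2:ℕ) = δ ^ ((2:ℕ):ℝ) from (Real.rpow_natCast δ 2).symm,
              ← Real.rpow_add hδ0]
            congr 1; push_cast; ring
    · have := hz1.const_mul (2 * C)
      simpa using this
  have hT3 : Tendsto (fun δ : ℝ => φ δ⁻¹) (𝓝[>] (0:ℝ)) (𝓝 0) := by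
    apply squeeze_zero_norm' (a := fun δ => 4 * C * δ ^ (1 - ε))
    · filter_upwards [self_mem_nhdsWithin] with δ (hδ0 : (0:ℝ) < δ)
      have hδi : 0 < δ⁻¹ := inv_pos.mpr hδ0
      have h1 : ‖φ δ⁻¹‖ = |u δ⁻¹| * (δ⁻¹) ^ (ε - 1) := by
        rw [hφ_def, Real.norm_eq_abs, abs_mul, abs_of_nonneg (Real.rpow_pos_of_pos hδi _).le]
      rw [h1]
      have h2 : (δ⁻¹ : ℝ) ^ (ε - 1) = δ ^ (1 - ε) := by
        rw [Real.inv_rpow hδ0.le, ← Real.rpow_neg hδ0.le]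
        norm_num
      rw [h2]
      exact mul_le_mul_of_nonneg_right (hub δ⁻¹) (Real.rpow_pos_of_pos hδ0 _).le
    · have := hz2.const_mul (4 * C)
      simpa using this
  refine ⟨L, ?_, ?_⟩
  · -- first PV integral
    unfold HasPV
    apply Tendsto.congr' _ hT1
    filter_upwards [Ioo_mem_nhdsGT_of_mem (Set.mem_Ico.mpr ⟨le_refl 0, one_pos⟩)] with δ hδ
    have hδ0 : 0 < δ := hδ.1
    have hδδi : δ ≤ δ⁻¹ := le_of_lt (lt_trans hδ.2 ((one_lt_inv₀ hδ0).mpr hδ.2))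
    rw [hdecomp g hgcont δ hδ]
    apply intervalIntegral.integral_congr
    intro t ht
    rw [uIcc_of_le hδδi] at ht
    exact (hkey_g t (lt_of_lt_of_le hδ0 ht.1)).symm
  · -- second PV integral
    unfold HasPV
    have hlim : Tendsto (fun δ : ℝ => (φ δ - φ δ⁻¹) + (ε - 1) * ∫ α in δ..δ⁻¹, ψ α)
        (𝓝[>] (0:ℝ)) (𝓝 ((0 - 0) + (ε - 1) * L)) :=
      (hT2.sub hT3).add (hT1.const_mul (ε - 1))
    have heq : ((0:ℝ) - 0) + (ε - 1) * L = -(1 - ε) * L := by ring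
    rw [heq] at hlim
    apply Tendsto.congr' _ hlim
    filter_upwards [Ioo_mem_nhdsGT_of_mem (Set.mem_Ico.mpr ⟨le_refl 0, one_pos⟩)] with δ hδ
    exact (hmain δ hδ).symm
end

section
/- Let f : ℝ → ℝ be bounded and differentiable, and suppose f attains its global maximum at a point x₀ ∈ ℝ (so f'(x₀) = 0 and f(x₀) ≥ f(α) for all α). Then for every 0 < ε < 1 for which the principal value integral converges, I₂ := PV ∫_ℝ [ f'(x₀) / ((x₀−α)/|x₀−α|^ε) − (1−ε)(f(x₀) − f(α))/|x₀−α|^{2−ε} ] · 1/(1 + ((f(x₀)−f(α)) |x₀−α|^ε/(x₀−α))²) dα ≤ 0. In particular, if f(·,t) is a regular solution of the regularized system ∂_t f − ε' ∂ₓ²f = PV ∫_ℝ ∂ₓ arctan(Δ_α^{ε'} f) dα attaining its spatial maximum at a finite point x_t, then M(t) = max_x f(x,t) satisfies M'(t) ≤ 0 at almost every such time t. -/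
open MeasureTheory Filter Set Real Topology

lemma aux_signpow {ε a : ℝ} (ha : a ≠ 0) :
    HasDerivAt (fun α : ℝ => |α| ^ ε / α) ((ε - 1) * |a| ^ (ε - 2)) a := by
  rcases ha.lt_or_gt with h | h
  · -- a < 0
    have hs : (0:ℝ) < -a := by linarith
    have h1 : HasDerivAt (fun α : ℝ => -α) (-1) a := (hasDerivAt_id a).neg
    have h2 : HasDerivAt (fun y : ℝ => y ^ ε) (ε * (-a) ^ (ε - 1)) (-a) :=
      Real.hasDerivAt_rpow_const (Or.inl hs.ne')
    have h3 : HasDerivAt (fun α : ℝ => (-α) ^ ε) (ε * (-a) ^ (ε - 1) * (-1)) a :=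
      h2.comp a h1
    have h4 : HasDerivAt (fun α : ℝ => α⁻¹) (-(a ^ 2)⁻¹) a := hasDerivAt_inv ha
    have h5 := h3.mul h4
    have heq : (fun α : ℝ => |α| ^ ε / α) =ᶠ[nhds a] fun α => (-α) ^ ε * α⁻¹ := by
      filter_upwards [Iio_mem_nhds h] with y hy
      rw [abs_of_neg hy, div_eq_mul_inv]
    refine (HasDerivAt.congr_of_eventuallyEq ?_ heq)
    refine h5.congr_deriv ?_
    rw [abs_of_neg h]
    have e1 : (-a) ^ (ε - 2) = (-a) ^ (ε-1) / (-a) := by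
      rw [show ε - 2 = (ε - 1) - 1 by ring, Real.rpow_sub hs, Real.rpow_one]
    have e2 : (-a) ^ (ε - 1) = (-a) ^ ε / (-a) := by
      rw [show ε - 1 = ε - 1 by ring, Real.rpow_sub hs, Real.rpow_one]
    rw [e1, e2]
    field_simp
    ring
  · -- 0 < a
    have h2 : HasDerivAt (fun y : ℝ => y ^ (ε-1)) ((ε-1) * a ^ (ε - 1 - 1)) a :=
      Real.hasDerivAt_rpow_const (Or.inl h.ne')
    have heq : (fun α : ℝ => |α| ^ ε / α) =ᶠ[nhds a] fun α => α ^ (ε-1) := by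
      filter_upwards [Ioi_mem_nhds h] with y hy
      rw [abs_of_pos hy, Real.rpow_sub hy, Real.rpow_one]
    refine (HasDerivAt.congr_of_eventuallyEq ?_ heq)
    refine h2.congr_deriv ?_
    · rw [abs_of_pos h]; ring_nf

lemma aux_diff {φ : ℝ → ℝ} (hφ : Differentiable ℝ φ) (x a : ℝ) :
    HasDerivAt (fun α : ℝ => φ x - φ (x - α)) (deriv φ (x - a)) a := by
  have hi : HasDerivAt (fun α : ℝ => x - α) (-1) a := by
    simpa using (hasDerivAt_id a).const_sub x
  have h2 : HasDerivAt (fun α : ℝ => φ (x - α)) (deriv φ (x - a) * (-1)) a :=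
    ((hφ (x - a)).hasDerivAt).comp a hi
  simpa using h2.const_sub (φ x)

lemma aux_regDiff_deriv {ε : ℝ} {φ : ℝ → ℝ} (hφ : Differentiable ℝ φ) {x a : ℝ} (ha : a ≠ 0) :
    HasDerivAt (fun α : ℝ => regDiff ε φ α x)
      (deriv φ (x - a) * (|a| ^ ε / a) + (φ x - φ (x - a)) * ((ε - 1) * |a| ^ (ε - 2))) a := by
  have := (aux_diff hφ x a).mul (aux_signpow (ε := ε) ha)
  have heq : (fun α : ℝ => regDiff ε φ α x) = fun α => (φ x - φ (x - α)) * (|α| ^ ε / α) := by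
    funext α; rw [regDiff, mul_div_assoc]
  rw [heq]
  exact this

lemma aux_key {ε : ℝ} (hε : 0 < ε) (hε1 : ε < 1) {φ : ℝ → ℝ}
    (hφ : Differentiable ℝ φ) (hφ' : Continuous (deriv φ)) {x : ℝ}
    (hmax : ∀ y, φ y ≤ φ x) (hd0 : deriv φ x = 0) {a b : ℝ} (hab : a ≤ b)
    (h0 : (0:ℝ) ∉ Icc a b) :
    ∫ α in Icc a b, regDiff ε (deriv φ) α x / (1 + (regDiff ε φ α x) ^ 2)
      ≤ arctan (regDiff ε φ a x) - arctan (regDiff ε φ b x) := by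
  have hne : ∀ α ∈ Icc a b, α ≠ 0 := fun α hα h => h0 (h ▸ hα)
  set Δ : ℝ → ℝ := fun α => regDiff ε φ α x with hΔ
  set u' : ℝ → ℝ := fun α => 1 / (1 + (Δ α) ^ 2) *
    (deriv φ (x - α) * (|α| ^ ε / α) + (φ x - φ (x - α)) * ((ε - 1) * |α| ^ (ε - 2))) with hu'
  have hu : ∀ α ∈ Icc a b, HasDerivAt (fun β => arctan (Δ β)) (u' α) α := fun α hα =>
    (aux_regDiff_deriv hφ (hne α hα)).arctan
  -- continuity facts
  have hcnum : Continuous fun α : ℝ => (φ x - φ (x - α)) * |α| ^ ε := by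
    have : Continuous fun α : ℝ => φ x - φ (x - α) :=
      continuous_const.sub (hφ.continuous.comp (continuous_const.sub continuous_id))
    exact this.mul (continuous_abs.rpow_const fun α => Or.inr hε.le)
  have hcΔ : ContinuousOn Δ (Icc a b) := by
    exact (hcnum.continuousOn.div continuousOn_id hne)
  have hcden : ContinuousOn (fun α => 1 + (Δ α) ^ 2) (Icc a b) :=
    continuousOn_const.add (hcΔ.pow 2)
  have hdenne : ∀ α ∈ Icc a b, 1 + (Δ α) ^ 2 ≠ 0 := fun α _ => by positivity
  have hcg : ContinuousOn (fun α => regDiff ε (deriv φ) α x / (1 + (Δ α) ^ 2)) (Icc a b) := by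
    have hcnum2 : Continuous fun α : ℝ => (deriv φ x - deriv φ (x - α)) * |α| ^ ε := by
      have : Continuous fun α : ℝ => deriv φ x - deriv φ (x - α) :=
        continuous_const.sub (hφ'.comp (continuous_const.sub continuous_id))
      exact this.mul (continuous_abs.rpow_const fun α => Or.inr hε.le)
    exact ((hcnum2.continuousOn.div continuousOn_id hne)).div hcden hdenne
  have hcu' : ContinuousOn u' (Icc a b) := by
    apply ContinuousOn.mul
    · exact continuousOn_const.div hcden hdenne
    · apply ContinuousOn.add
      · exact ((hφ'.comp (continuous_const.sub continuous_id)).continuousOn).mul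
          (((continuous_abs.rpow_const fun α => Or.inr hε.le).continuousOn).div
            continuousOn_id hne)
      · exact ((continuous_const.sub (hφ.continuous.comp
            (continuous_const.sub continuous_id))).continuousOn).mul
          (continuousOn_const.mul ((continuous_abs.continuousOn).rpow_const
            fun α hα => Or.inl (abs_ne_zero.2 (hne α hα))))
  have hgI : IntegrableOn (fun α => regDiff ε (deriv φ) α x / (1 + (Δ α) ^ 2)) (Icc a b) :=
    hcg.integrableOn_compact isCompact_Icc
  have huI : IntegrableOn u' (Icc a b) := hcu'.integrableOn_compact isCompact_Icc
  -- pointwise inequality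
  have key_pt : ∀ α ∈ Icc a b, regDiff ε (deriv φ) α x / (1 + (Δ α) ^ 2) ≤ -u' α := by
    intro α hα
    have hden : (0:ℝ) < 1 + (Δ α) ^ 2 := by positivity
    have h1 : regDiff ε (deriv φ) α x = -(deriv φ (x - α)) * (|α| ^ ε / α) := by
      rw [regDiff, hd0]; ring
    have h2 : -u' α - regDiff ε (deriv φ) α x / (1 + (Δ α) ^ 2)
        = 1 / (1 + (Δ α) ^ 2) * ((1 - ε) * ((φ x - φ (x - α)) * |α| ^ (ε - 2))) := by
      rw [hu', h1]
      set P := |α| ^ ε / α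
      set Q := |α| ^ (ε - 2)
      field_simp
      ring
    have h3 : 0 ≤ 1 / (1 + (Δ α) ^ 2) * ((1 - ε) * ((φ x - φ (x - α)) * |α| ^ (ε - 2))) := by
      apply mul_nonneg (by positivity)
      apply mul_nonneg (by linarith)
      exact mul_nonneg (sub_nonneg.2 (hmax _)) (Real.rpow_nonneg (abs_nonneg _) _)
    linarith [h2 ▸ h3]
  calc ∫ α in Icc a b, regDiff ε (deriv φ) α x / (1 + (Δ α) ^ 2)
      ≤ ∫ α in Icc a b, -u' α :=
        setIntegral_mono_on hgI huI.neg measurableSet_Icc key_pt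
    _ = arctan (Δ a) - arctan (Δ b) := by
        rw [integral_Icc_eq_integral_Ioc, ← intervalIntegral.integral_of_le hab]
        rw [intervalIntegral.integral_eq_sub_of_hasDerivAt
          (f := fun β => -arctan (Δ β)) (f' := fun α => -u' α)
          (fun α hα => ((hu α (by rwa [Set.uIcc_of_le hab] at hα)).neg))
          ((intervalIntegrable_iff_integrableOn_Ioc_of_le hab).2
            ((huI.mono_set Ioc_subset_Icc_self).neg))]
        ring

lemma aux_deriv_contDiff {φ : ℝ → ℝ} (hφ : ContDiff ℝ 2 φ) : ContDiff ℝ 1 (deriv φ) := by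
  have h2 : ContDiff ℝ ((1:ℕ) + 1) φ := by norm_num; exact hφ
  exact (contDiff_succ_iff_deriv.mp h2).2.2

lemma aux_second_deriv {φ : ℝ → ℝ} (hφ : ContDiff ℝ 2 φ) {x : ℝ}
    (hmax : ∀ y, φ y ≤ φ x) : deriv (deriv φ) x ≤ 0 := by
  by_contra hlt
  push_neg at hlt
  have hψ : Differentiable ℝ (deriv φ) := (aux_deriv_contDiff hφ).differentiable one_ne_zero
  have hψ0 : deriv φ x = 0 :=
    IsLocalMax.deriv_eq_zero (Filter.Eventually.of_forall fun y => hmax y)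
  have hslope : Tendsto (slope (deriv φ) x) (𝓝[≠] x) (𝓝 (deriv (deriv φ) x)) :=
    hasDerivAt_iff_tendsto_slope.mp (hψ x).hasDerivAt
  have hev : ∀ᶠ y in 𝓝[>] x, 0 < slope (deriv φ) x y :=
    (hslope.mono_left (nhdsWithin_mono x fun y hy => ne_of_gt hy)).eventually
      (eventually_gt_nhds hlt)
  have hev2 : ∀ᶠ y in 𝓝[>] x, 0 < deriv φ y := by
    filter_upwards [hev, self_mem_nhdsWithin] with y hy hy2
    have : slope (deriv φ) x y = deriv φ y / (y - x) := by
      rw [slope_def_field, hψ0]; ring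
    rw [this] at hy
    have hyx : 0 < y - x := sub_pos.2 hy2
    have h := mul_pos hy hyx
    rwa [div_mul_cancel₀ _ (ne_of_gt hyx)] at h
  obtain ⟨c, hc, hsub⟩ := mem_nhdsGT_iff_exists_Ioo_subset.mp hev2
  have hmono := strictMonoOn_of_deriv_pos (convex_Icc x c)
    (hφ.continuous.continuousOn) (fun y hy => by
      rw [interior_Icc] at hy; exact hsub hy)
  have hxc : x < c := hc
  have : φ x < φ c :=
    hmono (left_mem_Icc.2 hxc.le) (right_mem_Icc.2 hxc.le) hxc
  exact absurd (hmax c) (not_le.2 this)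

lemma aux_small_bd {ε : ℝ} {φ : ℝ → ℝ} {K : ℝ} (hφ : Differentiable ℝ φ)
    (hK' : ∀ y, |deriv φ y| ≤ K) (x : ℝ) {β : ℝ} (hβ : β ≠ 0) :
    |regDiff ε φ β x| ≤ K * |β| ^ ε := by
  have hK0 : 0 ≤ K := (abs_nonneg _).trans (hK' 0)
  have hlip : LipschitzWith K.toNNReal φ := by
    apply lipschitzWith_of_nnnorm_deriv_le hφ
    intro y
    rw [← NNReal.coe_le_coe, coe_nnnorm, Real.coe_toNNReal _ hK0]
    exact hK' y
  have hd : |φ x - φ (x - β)| ≤ K * |β| := by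
    have := hlip.dist_le_mul x (x - β)
    rw [Real.dist_eq, Real.dist_eq, Real.coe_toNNReal _ hK0] at this
    simpa using this
  have habs : 0 < |β| := abs_pos.2 hβ
  rw [regDiff, abs_div, abs_mul, abs_of_nonneg (Real.rpow_nonneg (abs_nonneg β) ε)]
  rw [div_le_iff₀ habs]
  calc |φ x - φ (x - β)| * |β| ^ ε ≤ K * |β| * |β| ^ ε :=
        mul_le_mul_of_nonneg_right hd (Real.rpow_nonneg (abs_nonneg β) ε)
    _ = K * |β| ^ ε * |β| := by ring

lemma aux_large_bd {ε : ℝ} {φ : ℝ → ℝ} {K : ℝ} (hK : ∀ y, |φ y| ≤ K) (x : ℝ) {β : ℝ}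
    (hβ : β ≠ 0) : |regDiff ε φ β x| ≤ 2 * K * |β| ^ ε / |β| := by
  have hd : |φ x - φ (x - β)| ≤ 2 * K := by
    have h1 := hK x; have h2 := hK (x - β)
    calc |φ x - φ (x - β)| ≤ |φ x| + |φ (x - β)| := abs_sub _ _
      _ ≤ 2 * K := by linarith
  have habs : 0 < |β| := abs_pos.2 hβ
  rw [regDiff, abs_div, abs_mul, abs_of_nonneg (Real.rpow_nonneg (abs_nonneg β) ε)]
  gcongr

lemma aux_tendsto_rpow {c : ℝ} (hc : 0 < c) :
    Tendsto (fun δ : ℝ => |δ| ^ c) (𝓝[>] 0) (𝓝 0) := by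
  have h : ContinuousAt (fun δ : ℝ => |δ| ^ c) 0 :=
    (Real.continuousAt_rpow_const _ _ (Or.inr hc.le)).comp continuous_abs.continuousAt
  have := h.tendsto
  rw [show |(0:ℝ)| ^ c = 0 by rw [abs_zero, Real.zero_rpow hc.ne']] at this
  exact this.mono_left nhdsWithin_le_nhds

lemma aux_boundary {ε : ℝ} (hε : 0 < ε) (hε1 : ε < 1) {φ : ℝ → ℝ} {K : ℝ}
    (hφ : Differentiable ℝ φ) (hK : ∀ y, |φ y| ≤ K) (hK' : ∀ y, |deriv φ y| ≤ K) (x : ℝ) :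
    Tendsto (fun δ : ℝ => (arctan (regDiff ε φ (-δ⁻¹) x) - arctan (regDiff ε φ (-δ) x)) +
        (arctan (regDiff ε φ δ x) - arctan (regDiff ε φ δ⁻¹ x)))
      (𝓝[>] (0:ℝ)) (𝓝 0) := by
  have hsmall : Tendsto (fun δ : ℝ => K * |δ| ^ ε) (𝓝[>] (0:ℝ)) (𝓝 0) := by
    simpa using (aux_tendsto_rpow hε).const_mul K
  have hlarge : Tendsto (fun δ : ℝ => 2 * K * |δ| ^ (1 - ε)) (𝓝[>] (0:ℝ)) (𝓝 0) := by
    simpa using (aux_tendsto_rpow (by linarith : (0:ℝ) < 1 - ε)).const_mul (2 * K)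
  have hT1 : Tendsto (fun δ : ℝ => regDiff ε φ δ x) (𝓝[>] (0:ℝ)) (𝓝 0) := by
    apply squeeze_zero_norm' ?_ hsmall
    filter_upwards [self_mem_nhdsWithin] with δ hδ
    exact aux_small_bd hφ hK' x (ne_of_gt hδ)
  have hT1' : Tendsto (fun δ : ℝ => regDiff ε φ (-δ) x) (𝓝[>] (0:ℝ)) (𝓝 0) := by
    apply squeeze_zero_norm' ?_ hsmall
    filter_upwards [self_mem_nhdsWithin] with δ hδ
    have := aux_small_bd (ε := ε) hφ hK' x (neg_ne_zero.2 (ne_of_gt hδ))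
    rwa [abs_neg] at this
  have heq : ∀ δ : ℝ, δ ∈ Ioi (0:ℝ) → 2 * K * |δ⁻¹| ^ ε / |δ⁻¹| = 2 * K * |δ| ^ (1 - ε) := by
    intro δ hδ
    have h1 : (0:ℝ) < |δ| := abs_pos.2 (ne_of_gt hδ)
    rw [abs_inv, Real.inv_rpow (abs_nonneg δ), Real.rpow_sub h1, Real.rpow_one]
    field_simp
  have hT2 : Tendsto (fun δ : ℝ => regDiff ε φ δ⁻¹ x) (𝓝[>] (0:ℝ)) (𝓝 0) := by
    apply squeeze_zero_norm' ?_ hlarge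
    filter_upwards [self_mem_nhdsWithin] with δ hδ
    rw [← heq δ hδ]
    exact aux_large_bd hK x (inv_ne_zero (ne_of_gt hδ))
  have hT2' : Tendsto (fun δ : ℝ => regDiff ε φ (-δ⁻¹) x) (𝓝[>] (0:ℝ)) (𝓝 0) := by
    apply squeeze_zero_norm' ?_ hlarge
    filter_upwards [self_mem_nhdsWithin] with δ hδ
    rw [← heq δ hδ]
    have := aux_large_bd (ε := ε) hK x (neg_ne_zero.2 (inv_ne_zero (ne_of_gt hδ)))
    rwa [abs_neg] at this
  have harc : ∀ F : ℝ → ℝ, Tendsto F (𝓝[>] (0:ℝ)) (𝓝 0) →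
      Tendsto (fun δ => arctan (F δ)) (𝓝[>] (0:ℝ)) (𝓝 0) := fun F hF =>
    (Real.continuous_arctan.tendsto' 0 0 Real.arctan_zero).comp hF
  have := ((harc _ hT2').sub (harc _ hT1')).add ((harc _ hT1).sub (harc _ hT2))
  simpa using this

lemma aux_pvSet_split {δ : ℝ} (h0 : 0 < δ) :
    pvSet δ = Set.Icc (-δ⁻¹) (-δ) ∪ Set.Icc δ δ⁻¹ := by
  have hinv : 0 < δ⁻¹ := inv_pos.2 h0
  ext α
  simp only [pvSet, Set.mem_setOf_eq, Set.mem_union, Set.mem_Icc]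
  rcases abs_cases α with ⟨he, hs⟩ | ⟨he, hs⟩ <;> rw [he] <;> constructor
  · rintro ⟨h1, h2⟩; right; exact ⟨h1, h2⟩
  · rintro (⟨h1, h2⟩ | ⟨h1, h2⟩) <;> constructor <;> linarith
  · rintro ⟨h1, h2⟩; left; constructor <;> linarith
  · rintro (⟨h1, h2⟩ | ⟨h1, h2⟩) <;> constructor <;> linarith

lemma aux_intOn {ε : ℝ} (hε : 0 < ε) {φ : ℝ → ℝ} (hφ : Differentiable ℝ φ)
    (hφ' : Continuous (deriv φ)) (x a b : ℝ) (hne : ∀ α ∈ Set.Icc a b, α ≠ 0) :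
    MeasureTheory.IntegrableOn
      (fun α => regDiff ε (deriv φ) α x / (1 + (regDiff ε φ α x) ^ 2))
      (Set.Icc a b) := by
  have hcnum : Continuous fun α : ℝ => (φ x - φ (x - α)) * |α| ^ ε := by
    have : Continuous fun α : ℝ => φ x - φ (x - α) :=
      continuous_const.sub (hφ.continuous.comp (continuous_const.sub continuous_id))
    exact this.mul (continuous_abs.rpow_const fun α => Or.inr hε.le)
  have hcΔ : ContinuousOn (fun α => regDiff ε φ α x) (Set.Icc a b) :=
    hcnum.continuousOn.div continuousOn_id hne
  have hcden : ContinuousOn (fun α => 1 + (regDiff ε φ α x) ^ 2) (Set.Icc a b) :=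
    continuousOn_const.add (hcΔ.pow 2)
  have hdenne : ∀ α ∈ Set.Icc a b, 1 + (regDiff ε φ α x) ^ 2 ≠ 0 := fun α _ => by positivity
  have hcnum2 : Continuous fun α : ℝ => (deriv φ x - deriv φ (x - α)) * |α| ^ ε := by
    have : Continuous fun α : ℝ => deriv φ x - deriv φ (x - α) :=
      continuous_const.sub (hφ'.comp (continuous_const.sub continuous_id))
    exact this.mul (continuous_abs.rpow_const fun α => Or.inr hε.le)
  exact (((hcnum2.continuousOn.div continuousOn_id hne)).div hcden
    hdenne).integrableOn_compact isCompact_Icc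

/-- Sign of the velocity at a spatial maximum. First part: at a global
maximum point `x₀` of a bounded differentiable `f`, any value `L` of the principal value
integral `I₂` (written after the change of variables `α ↦ x₀ - α`) satisfies `L ≤ 0`.
Second part: for a regular solution of the regularized system attaining its spatial
maximum at a finite point `x_t`, one has `M'(t) = ∂ₜ f(x_t, t) ≤ 0`. -/
theorem velocity_nonpositive_at_maximum :
    -- Part 1: the static inequality `I₂ ≤ 0` at a global maximum point
    (∀ f : ℝ → ℝ, Differentiable ℝ f → (∃ C, ∀ x, |f x| ≤ C) →
      ∀ x₀ : ℝ, (∀ α : ℝ, f α ≤ f x₀) →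
      ∀ ε ∈ Set.Ioo (0:ℝ) 1, ∀ L : ℝ,
        HasPV (fun β =>
          (deriv f x₀ * |β| ^ ε / β -
              (1 - ε) * (f x₀ - f (x₀ - β)) / |β| ^ (2 - ε)) /
            (1 + ((f x₀ - f (x₀ - β)) * |β| ^ ε / β) ^ 2)) L →
        L ≤ 0) ∧
    -- Part 2: decay of the maximum for regular solutions of the regularized system
    (∀ ε' T : ℝ, ε' ∈ Set.Ioo (0:ℝ) 1 → 0 < T →
      ∀ f : ℝ → ℝ → ℝ,
        IsRegSolution ε' f T →
        (∀ t ∈ Set.Icc (0:ℝ) T, ContDiff ℝ 2 (f t) ∧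
          ∃ K : ℝ, ∀ x : ℝ, |f t x| ≤ K ∧ |deriv (f t) x| ≤ K ∧ |deriv (deriv (f t)) x| ≤ K) →
        ∀ t ∈ Set.Ioc (0:ℝ) T, ∀ xt : ℝ, (∀ x : ℝ, f t x ≤ f t xt) →
          deriv (fun s => f s xt) t ≤ 0) := by
  constructor
  · intro f hdiff hbd x₀ hmax ε hε L hPV
    have hd0 : deriv f x₀ = 0 :=
      IsLocalMax.deriv_eq_zero (Filter.Eventually.of_forall hmax)
    refine le_of_tendsto hPV (Filter.Eventually.of_forall fun δ => ?_)
    apply MeasureTheory.integral_nonpos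
    intro β
    have hnn : 0 ≤ (1 - ε) * (f x₀ - f (x₀ - β)) / |β| ^ (2 - ε) := by
      apply div_nonneg
      · exact mul_nonneg (by linarith [hε.2]) (sub_nonneg.2 (hmax _))
      · exact Real.rpow_nonneg (abs_nonneg β) _
    have hnum : deriv f x₀ * |β| ^ ε / β -
        (1 - ε) * (f x₀ - f (x₀ - β)) / |β| ^ (2 - ε) ≤ 0 := by
      rw [hd0, zero_mul, zero_div]; linarith
    have hden : (0:ℝ) < 1 + ((f x₀ - f (x₀ - β)) * |β| ^ ε / β) ^ 2 := by positivity
    exact div_nonpos_of_nonpos_of_nonneg hnum hden.le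
  · intro ε' T hε' hT f hreg hregu t ht xt hmax
    obtain ⟨-, hPV⟩ := hreg t ht xt
    obtain ⟨h2, K, hKa⟩ := hregu t ⟨ht.1.le, ht.2⟩
    have hφd : Differentiable ℝ (f t) := h2.differentiable (by norm_num)
    have hφ' : Continuous (deriv (f t)) := h2.continuous_deriv (by norm_num)
    have hK : ∀ y, |f t y| ≤ K := fun y => (hKa y).1
    have hK' : ∀ y, |deriv (f t) y| ≤ K := fun y => (hKa y).2.1
    have hd0 : deriv (f t) xt = 0 :=
      IsLocalMax.deriv_eq_zero (Filter.Eventually.of_forall hmax)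
    have hsec : deriv (deriv (f t)) xt ≤ 0 := aux_second_deriv h2 hmax
    have hL : deriv (fun s => f s xt) t - ε' * deriv (deriv (f t)) xt ≤ 0 := by
      refine le_of_tendsto_of_tendsto hPV
        (aux_boundary hε'.1 hε'.2 hφd hK hK' xt) ?_
      filter_upwards [Ioo_mem_nhdsGT_of_mem
        (Set.left_mem_Ico.mpr one_pos)] with δ hδ
      obtain ⟨hδ0, hδ1⟩ := hδ
      have hδinv : (0:ℝ) < δ⁻¹ := inv_pos.2 hδ0
      have hδle : δ ≤ δ⁻¹ := by nlinarith [mul_inv_cancel₀ (ne_of_gt hδ0)]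
      have hne1 : ∀ α ∈ Set.Icc (-δ⁻¹) (-δ), α ≠ 0 := fun α hα h => by
        rw [h] at hα
        have := hα.2
        simp at this
        linarith
      have hne2 : ∀ α ∈ Set.Icc δ δ⁻¹, α ≠ 0 := fun α hα h => by
        rw [h] at hα
        exact absurd hα.1 (not_le.2 hδ0)
      have hdisj : Disjoint (Set.Icc (-δ⁻¹) (-δ)) (Set.Icc δ δ⁻¹) := by
        rw [Set.disjoint_left]
        intro α h1 h2
        rw [Set.mem_Icc] at h1 h2
        linarith
      rw [aux_pvSet_split hδ0,
        MeasureTheory.setIntegral_union hdisj measurableSet_Icc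
          (aux_intOn hε'.1 hφd hφ' xt _ _ hne1)
          (aux_intOn hε'.1 hφd hφ' xt _ _ hne2)]
      exact add_le_add
        (aux_key hε'.1 hε'.2 hφd hφ' hmax hd0 (by linarith) (fun h => hne1 0 h rfl))
        (aux_key hε'.1 hε'.2 hφd hφ' hmax hd0 hδle (fun h => hne2 0 h rfl))
    have hmul : ε' * deriv (deriv (f t)) xt ≤ 0 :=
      mul_nonpos_of_nonneg_of_nonpos hε'.1.le hsec
    linarith
end
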